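/- Let (X_k) be a subcritical positive regular nonsingular d-type GW process with Perron root ρ < 1 having finite second moments, u, v the normalized Perron eigenvectors, γ > 0 with lim_k ρ^{-k} P_x(X_k ≠ 0) = γ x·u, and g the generating function of the Yaglom limit ν. Then for every r ∈ [0,1]^d and all i,j: lim_{k→∞} ρ^{-k} ∂f_{k,j}(r)/∂r_i = γ u_j ∂g(r)/∂r_i. -/

import Mathlib

open MeasureTheory Filter Topology
open scoped ENNReal NNReal

noncomputable section

namespace GW

variable {d : ℕ}

/-- `a^k = ∏_j a_j^{k_j}` for a multi-index `k`. -/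
def npow (a : Fin d → ℝ) (k : Fin d → ℕ) : ℝ := ∏ j, a j ^ k j

/-- Dirac mass at `0` on `ℕ^d`. -/
def delta : (Fin d → ℕ) → ℝ := fun k => if k = 0 then 1 else 0

/-- Convolution of two (sub)probability weight functions on `ℕ^d`. -/
def conv (p q : (Fin d → ℕ) → ℝ) : (Fin d → ℕ) → ℝ :=
  fun k => ∑' a : {a : Fin d → ℕ // a ≤ k}, p a.1 * q (k - a.1)

/-- `n`-fold convolution power `p^{*n}` (with `p^{*0} = δ_0`). -/
def convIter (p : (Fin d → ℕ) → ℝ) : ℕ → (Fin d → ℕ) → ℝ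
  | 0 => delta
  | n + 1 => conv p (convIter p n)

/-- One-step transition probabilities of the multitype GW process:
`P_1(x, ·) = p_1^{*x_1} * ⋯ * p_d^{*x_d}`. -/
def trans (p : Fin d → (Fin d → ℕ) → ℝ) (x : Fin d → ℕ) : (Fin d → ℕ) → ℝ :=
  (List.ofFn (fun i => convIter (p i) (x i))).foldr conv delta

/-- `p` is a probability mass function on `ℕ^d`. -/
structure IsPMF (p : (Fin d → ℕ) → ℝ) : Prop where
  nonneg : ∀ k, 0 ≤ p k
  hasSum : HasSum p 1

/-- `μ x` is the law on path space of the multitype GW process with offspring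
distributions `p` started at `x`: a probability measure whose finite-dimensional
distributions are products of one-step GW transition probabilities. -/
def IsGW (p : Fin d → (Fin d → ℕ) → ℝ)
    (μ : (Fin d → ℕ) → Measure (ℕ → Fin d → ℕ)) : Prop :=
  (∀ x, IsProbabilityMeasure (μ x)) ∧
  ∀ (x : Fin d → ℕ) (k : ℕ) (xs : ℕ → Fin d → ℕ), xs 0 = x →
    μ x {ω | ∀ j ≤ k, ω j = xs j}
      = ENNReal.ofReal (∏ j ∈ Finset.range k, trans p (xs j) (xs (j + 1)))

/-- Total progeny of type `i` along a path (valued in `ℝ≥0∞`). -/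
def Ntot (ω : ℕ → Fin d → ℕ) (i : Fin d) : ℝ≥0∞ := ∑' k, (ω k i : ℝ≥0∞)

instance finiteLe (k : Fin d → ℕ) : Finite {a : Fin d → ℕ // a ≤ k} := by
  apply Finite.of_injective
    (fun a => (fun i => (⟨a.1 i, Nat.lt_succ_of_le (a.2 i)⟩ : Fin (k i + 1))))
  intro a b h
  ext i
  exact congrArg Fin.val (congrFun h i)

/-- key reindexing: sum over (k, a ≤ k) equals sum over pairs. -/
lemma key_reindex (F : (Fin d → ℕ) → (Fin d → ℕ) → ℝ≥0∞) :
    ∑' k : Fin d → ℕ, ∑' a : {a : Fin d → ℕ // a ≤ k}, F a.1 (k - a.1)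
      = ∑' a : Fin d → ℕ, ∑' b : Fin d → ℕ, F a b := by
  rw [← ENNReal.tsum_sigma' (f := fun (s : Σ k : Fin d → ℕ, {a : Fin d → ℕ // a ≤ k}) =>
        F s.2.1 (s.1 - s.2.1)),
    ← ENNReal.tsum_prod (f := fun a b => F a b)]
  set f : (Σ k : Fin d → ℕ, {a : Fin d → ℕ // a ≤ k}) → (Fin d → ℕ) × (Fin d → ℕ) :=
    fun s => (s.2.1, s.1 - s.2.1) with hf
  have hbij : Function.Bijective f := by
    constructor
    · rintro ⟨k, a, ha⟩ ⟨k', a', ha'⟩ h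
      simp only [hf, Prod.mk.injEq] at h
      obtain ⟨h1, h2⟩ := h
      have hk : k = k' := by
        rw [← add_tsub_cancel_of_le ha, ← add_tsub_cancel_of_le ha', h2, h1]
      subst hk
      simp only [Sigma.mk.inj_iff, heq_eq_eq, true_and]
      exact Subtype.ext h1
    · rintro ⟨a, b⟩
      exact ⟨⟨a + b, ⟨a, le_self_add⟩⟩, by simp [hf]⟩
  rw [← (Equiv.ofBijective f hbij).tsum_eq (fun ab => F ab.1 ab.2)]
  rfl

/-! ### ENNReal moment machinery -/

def toE (q : (Fin d → ℕ) → ℝ) : (Fin d → ℕ) → ℝ≥0∞ := fun z => ENNReal.ofReal (q z)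
def massE (q : (Fin d → ℕ) → ℝ) : ℝ≥0∞ := ∑' z, toE q z
def wU (u : Fin d → ℝ) (z : Fin d → ℕ) : ℝ≥0∞ := ENNReal.ofReal (∑ i, (z i : ℝ) * u i)
def meanU (u : Fin d → ℝ) (q : (Fin d → ℕ) → ℝ) : ℝ≥0∞ := ∑' z, toE q z * wU u z
def sqU (u : Fin d → ℝ) (q : (Fin d → ℕ) → ℝ) : ℝ≥0∞ := ∑' z, toE q z * (wU u z) ^ 2

lemma conv_nonneg' {p q : (Fin d → ℕ) → ℝ} (hp : ∀ z, 0 ≤ p z) (hq : ∀ z, 0 ≤ q z) :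
    ∀ z, 0 ≤ conv p q z := fun z =>
  tsum_nonneg fun a => mul_nonneg (hp _) (hq _)

lemma toE_conv {p q : (Fin d → ℕ) → ℝ} (hp : ∀ z, 0 ≤ p z) (hq : ∀ z, 0 ≤ q z) (k : Fin d → ℕ) :
    toE (conv p q) k = ∑' a : {a : Fin d → ℕ // a ≤ k}, toE p a.1 * toE q (k - a.1) := by
  have hsum : Summable (fun a : {a : Fin d → ℕ // a ≤ k} => p a.1 * q (k - a.1)) := by
    have : Finite {a : Fin d → ℕ // a ≤ k} := finiteLe k
    exact .of_finite
  rw [toE, conv, ENNReal.ofReal_tsum_of_nonneg (fun a => mul_nonneg (hp _) (hq _)) hsum]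
  exact tsum_congr fun a => ENNReal.ofReal_mul (hp _)

lemma wU_add (u : Fin d → ℝ) (hu : ∀ i, 0 ≤ u i) (a b : Fin d → ℕ) :
    wU u (a + b) = wU u a + wU u b := by
  rw [wU, wU, wU, ← ENNReal.ofReal_add]
  · congr 1
    rw [← Finset.sum_add_distrib]
    refine Finset.sum_congr rfl fun i _ => ?_
    have : ((a + b) i : ℝ) = (a i : ℝ) + b i := by push_cast [Pi.add_apply]; ring
    rw [this]; ring
  · exact Finset.sum_nonneg fun i _ => mul_nonneg (Nat.cast_nonneg _) (hu i)
  · exact Finset.sum_nonneg fun i _ => mul_nonneg (Nat.cast_nonneg _) (hu i)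

/-- `Pgood u q m c`: `q` is a pmf with `u`-mean `m` and second `u`-moment at most `c + m²`. -/
structure Pgood (u : Fin d → ℝ) (q : (Fin d → ℕ) → ℝ) (m c : ℝ≥0∞) : Prop where
  nn : ∀ z, 0 ≤ q z
  mass1 : massE q = 1
  mean : meanU u q = m
  sq : sqU u q ≤ c + m ^ 2

lemma conv_expand {p q : (Fin d → ℕ) → ℝ} (hp : ∀ z, 0 ≤ p z) (hq : ∀ z, 0 ≤ q z)
    (g : (Fin d → ℕ) → ℝ≥0∞) :
    ∑' k, toE (conv p q) k * g k
      = ∑' a, ∑' b, toE p a * toE q b * g (a + b) := by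
  rw [← key_reindex (fun a b => toE p a * toE q b * g (a + b))]
  refine tsum_congr fun k => ?_
  rw [toE_conv hp hq, ← ENNReal.tsum_mul_right]
  refine tsum_congr fun a => ?_
  congr 2
  exact (add_tsub_cancel_of_le a.2).symm

lemma Pgood.conv {u : Fin d → ℝ} (hu : ∀ i, 0 ≤ u i) {p q : (Fin d → ℕ) → ℝ}
    {m1 c1 m2 c2 : ℝ≥0∞} (h1 : Pgood u p m1 c1) (h2 : Pgood u q m2 c2) :
    Pgood u (GW.conv p q) (m1 + m2) (c1 + c2) := by
  have hmass : massE (GW.conv p q) = 1 := by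
    have := conv_expand h1.nn h2.nn (fun _ => 1)
    simp only [mul_one] at this
    rw [massE, this]
    have hfac : (∑' (a : Fin d → ℕ), ∑' (b : Fin d → ℕ), toE p a * toE q b)
        = (∑' a, toE p a) * (∑' b, toE q b) := by
      rw [← ENNReal.tsum_mul_right]
      exact tsum_congr fun a => ENNReal.tsum_mul_left
    rw [hfac, ← massE, ← massE, h1.mass1, h2.mass1, one_mul]
  have hmean : meanU u (GW.conv p q) = m1 + m2 := by
    rw [meanU, conv_expand h1.nn h2.nn (wU u)]
    have : ∀ a b : Fin d → ℕ, toE p a * toE q b * wU u (a + b)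
        = toE p a * wU u a * toE q b + toE p a * (toE q b * wU u b) := by
      intro a b; rw [wU_add u hu]; ring
    calc ∑' a, ∑' b, toE p a * toE q b * wU u (a + b)
        = ∑' a, ((∑' b, toE p a * wU u a * toE q b) + ∑' b, toE p a * (toE q b * wU u b)) := by
          refine tsum_congr fun a => ?_
          rw [← ENNReal.tsum_add]
          exact tsum_congr fun b => this a b
      _ = m1 + m2 := by
          rw [ENNReal.tsum_add]
          congr 1
          · calc ∑' a, ∑' b, toE p a * wU u a * toE q b
                = ∑' a, toE p a * wU u a * massE q := by
                  exact tsum_congr fun a => ENNReal.tsum_mul_left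
              _ = m1 := by rw [h2.mass1]; simp only [mul_one]; exact h1.mean
          · calc ∑' a, ∑' b, toE p a * (toE q b * wU u b)
                = ∑' a, toE p a * meanU u q := tsum_congr fun a => ENNReal.tsum_mul_left
              _ = m2 := by rw [ENNReal.tsum_mul_right, ← massE, h1.mass1, one_mul, h2.mean]
  refine ⟨conv_nonneg' h1.nn h2.nn, hmass, hmean, ?_⟩
  rw [sqU, conv_expand h1.nn h2.nn (fun z => (wU u z) ^ 2)]
  have hexp : ∀ a b : Fin d → ℕ, toE p a * toE q b * wU u (a + b) ^ 2
      = toE p a * wU u a ^ 2 * toE q b + 2 * (toE p a * wU u a) * (toE q b * wU u b)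
        + toE p a * (toE q b * wU u b ^ 2) := by
    intro a b; rw [wU_add u hu]; ring
  calc ∑' a, ∑' b, toE p a * toE q b * wU u (a + b) ^ 2
      = ∑' a, ((∑' b, toE p a * wU u a ^ 2 * toE q b)
          + (∑' b, 2 * (toE p a * wU u a) * (toE q b * wU u b))
          + ∑' b, toE p a * (toE q b * wU u b ^ 2)) := by
        refine tsum_congr fun a => ?_
        rw [← ENNReal.tsum_add, ← ENNReal.tsum_add]
        exact tsum_congr fun b => by rw [hexp a b]
    _ = sqU u p * massE q + 2 * meanU u p * meanU u q + massE p * sqU u q := by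
        rw [ENNReal.tsum_add, ENNReal.tsum_add]
        congr 1
        · congr 1
          · calc ∑' a, ∑' b, toE p a * wU u a ^ 2 * toE q b
                = ∑' a, toE p a * wU u a ^ 2 * massE q :=
                  tsum_congr fun a => ENNReal.tsum_mul_left
              _ = sqU u p * massE q := ENNReal.tsum_mul_right
          · calc ∑' a, ∑' b, 2 * (toE p a * wU u a) * (toE q b * wU u b)
                = ∑' a, 2 * (toE p a * wU u a) * meanU u q :=
                  tsum_congr fun a => ENNReal.tsum_mul_left
              _ = 2 * meanU u p * meanU u q := by
                  rw [ENNReal.tsum_mul_right]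
                  congr 1
                  rw [ENNReal.tsum_mul_left, meanU]
        · calc ∑' a, ∑' b, toE p a * (toE q b * wU u b ^ 2)
              = ∑' a, toE p a * sqU u q := tsum_congr fun a => ENNReal.tsum_mul_left
            _ = massE p * sqU u q := ENNReal.tsum_mul_right
    _ ≤ (c1 + c2) + (m1 + m2) ^ 2 := by
        rw [h1.mass1, h2.mass1, h1.mean, h2.mean, mul_one, one_mul]
        calc sqU u p + 2 * m1 * m2 + sqU u q
            ≤ (c1 + m1 ^ 2) + 2 * m1 * m2 + (c2 + m2 ^ 2) := by
              gcongr
              · exact h1.sq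
              · exact h2.sq
          _ = (c1 + c2) + (m1 + m2) ^ 2 := by ring


lemma wU_zero (u : Fin d → ℝ) : wU u 0 = 0 := by
  simp [wU]

lemma Pgood_delta (u : Fin d → ℝ) : Pgood u (delta (d := d)) 0 0 := by
  have hnn : ∀ z, 0 ≤ delta (d := d) z := by
    intro z; unfold GW.delta; split <;> norm_num
  have htoE : ∀ z, toE (delta (d := d)) z = if z = 0 then 1 else 0 := by
    intro z; unfold toE GW.delta; split <;> simp
  refine ⟨hnn, ?_, ?_, ?_⟩
  · rw [massE, tsum_eq_single 0 (fun z hz => by rw [htoE]; simp [hz])]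
    rw [htoE]; simp
  · rw [meanU, ENNReal.summable.tsum_eq_zero_iff]
    intro z
    by_cases hz : z = 0
    · subst hz; rw [wU_zero]; simp
    · rw [htoE]; simp [hz]
  · rw [sqU, ENNReal.summable.tsum_eq_zero_iff |>.mpr, zero_add]
    · simp
    · intro z
      by_cases hz : z = 0
      · subst hz; rw [wU_zero]; simp
      · rw [htoE]; simp [hz]

lemma Pgood_iter {u : Fin d → ℝ} (hu : ∀ i, 0 ≤ u i) {q : (Fin d → ℕ) → ℝ} {m c : ℝ≥0∞}
    (h : Pgood u q m c) : ∀ n : ℕ, Pgood u (convIter q n) (n * m) (n * c)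
  | 0 => by simpa [convIter] using Pgood_delta u
  | n + 1 => by
    have := (h.conv hu (Pgood_iter hu h n))
    rw [convIter]
    convert this using 1 <;> push_cast <;> ring

lemma Pgood_foldr {u : Fin d → ℝ} (hu : ∀ i, 0 ≤ u i) :
    ∀ l : List (((Fin d → ℕ) → ℝ) × ℝ≥0∞ × ℝ≥0∞),
      (∀ e ∈ l, Pgood u e.1 e.2.1 e.2.2) →
      Pgood u ((l.map Prod.fst).foldr conv delta) (l.map (fun e => e.2.1)).sum
        (l.map (fun e => e.2.2)).sum
  | [], _ => by simpa using Pgood_delta u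
  | e :: l, h => by
    have hl := Pgood_foldr hu l (fun e' he' => h e' (List.mem_cons_of_mem _ he'))
    have he := h e (List.mem_cons_self)
    simpa using he.conv hu hl

lemma Pgood_trans {u : Fin d → ℝ} (hu : ∀ i, 0 ≤ u i) {p : Fin d → (Fin d → ℕ) → ℝ}
    {m c : Fin d → ℝ≥0∞} (h : ∀ i, Pgood u (p i) (m i) (c i)) (y : Fin d → ℕ) :
    Pgood u (trans p y) (∑ i, (y i) * m i) (∑ i, (y i) * c i) := by
  have := Pgood_foldr hu
    (List.ofFn (fun i => (convIter (p i) (y i), ((y i : ℝ≥0∞) * m i, (y i : ℝ≥0∞) * c i))))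
    (by
      intro e he
      rw [List.mem_ofFn] at he
      obtain ⟨i, rfl⟩ := he
      exact Pgood_iter hu (h i) (y i))
  simp only [List.map_ofFn, List.sum_ofFn, Function.comp] at this
  convert this using 2
  rfl


lemma foldr_nonneg : ∀ l : List ((Fin d → ℕ) → ℝ), (∀ q ∈ l, ∀ z, 0 ≤ q z) →
    ∀ z, 0 ≤ (l.foldr conv delta) z
  | [], _ => by
    intro z
    show (0:ℝ) ≤ delta z
    unfold GW.delta; split <;> norm_num
  | q :: l, h => by
    intro z
    exact conv_nonneg' (h q (List.mem_cons_self))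
      (foldr_nonneg l (fun q' h' => h q' (List.mem_cons_of_mem _ h'))) z

lemma convIter_nonneg {q : (Fin d → ℕ) → ℝ} (hq : ∀ z, 0 ≤ q z) :
    ∀ n z, 0 ≤ convIter q n z
  | 0 => by
    intro z
    show (0:ℝ) ≤ delta z
    unfold GW.delta; split <;> norm_num
  | n + 1 => fun z => conv_nonneg' hq (convIter_nonneg hq n) z

lemma trans_nonneg {p : Fin d → (Fin d → ℕ) → ℝ} (hp : ∀ i z, 0 ≤ p i z) (y z : Fin d → ℕ) :
    0 ≤ trans p y z := by
  refine foldr_nonneg _ ?_ z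
  intro q hq
  rw [List.mem_ofFn] at hq
  obtain ⟨i, rfl⟩ := hq
  exact convIter_nonneg (hp i) (y i)

/-- sum over cylinder paths from `x` to `z` in `k` steps of the product of transition
probabilities. -/
def Qpath (p : Fin d → (Fin d → ℕ) → ℝ) (x : Fin d → ℕ) (k : ℕ) (z : Fin d → ℕ) : ℝ≥0∞ :=
  ∑' xs : {xs : Fin (k + 1) → Fin d → ℕ // xs 0 = x ∧ xs (Fin.last k) = z},
    ENNReal.ofReal (∏ t : Fin k, trans p (xs.1 t.castSucc) (xs.1 t.succ))

lemma Qpath_zero (p : Fin d → (Fin d → ℕ) → ℝ) (x z : Fin d → ℕ) :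
    Qpath p x 0 z = if z = x then 1 else 0 := by
  by_cases hz : z = x
  · subst hz
    rw [Qpath, tsum_eq_single ⟨fun _ => z, rfl, rfl⟩ ?_]
    · simp
    · rintro ⟨xs, h0, h1⟩ hb
      exfalso
      apply hb
      ext t
      have : t = 0 := Fin.eq_zero t
      rw [this]
      exact congrFun h0 _
  · have : IsEmpty {xs : Fin 1 → Fin d → ℕ // xs 0 = x ∧ xs (Fin.last 0) = z} := by
      constructor
      rintro ⟨xs, h0, h1⟩
      apply hz
      rw [← h1, show (Fin.last 0) = 0 from rfl, h0]
    rw [Qpath, tsum_empty]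
    simp [hz]

lemma Qpath_succ (p : Fin d → (Fin d → ℕ) → ℝ) (hp : ∀ i z, 0 ≤ p i z) (x : Fin d → ℕ) (k : ℕ)
    (z : Fin d → ℕ) :
    Qpath p x (k + 1) z = ∑' y, Qpath p x k y * ENNReal.ofReal (trans p y z) := by
  classical
  set S : (Fin d → ℕ) → Type _ :=
    fun y => {xs : Fin (k + 1) → Fin d → ℕ // xs 0 = x ∧ xs (Fin.last k) = y} with hS
  set f : (Σ y : Fin d → ℕ, S y) →
      {xs : Fin (k + 2) → Fin d → ℕ // xs 0 = x ∧ xs (Fin.last (k + 1)) = z} :=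
    fun s => ⟨Fin.snoc s.2.1 z, by
      constructor
      · rw [show (0 : Fin (k + 2)) = Fin.castSucc 0 from rfl, Fin.snoc_castSucc]
        exact s.2.2.1
      · exact Fin.snoc_last _ _⟩ with hfdef
  have hbij : Function.Bijective f := by
    constructor
    · rintro ⟨y, xs, h0, h1⟩ ⟨y', xs', h0', h1'⟩ h
      simp only [hfdef, Subtype.mk.injEq] at h
      have hxs : xs = xs' := by
        funext t
        have := congrFun h t.castSucc
        rwa [Fin.snoc_castSucc, Fin.snoc_castSucc] at this
      have hy : y = y' := by rw [← h1, ← h1', hxs]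
      subst hy
      congr 1
      exact Subtype.ext hxs
    · rintro ⟨xs, h0, h1⟩
      refine ⟨⟨xs (Fin.castSucc (Fin.last k)), ⟨Fin.init xs, ?_, rfl⟩⟩, ?_⟩
      · show xs (Fin.castSucc 0) = x
        rw [Fin.castSucc_zero, h0]
      · apply Subtype.ext
        show Fin.snoc (Fin.init xs) z = xs
        rw [← h1]
        exact Fin.snoc_init_self xs
  have hsplit : ∀ s : Σ y : Fin d → ℕ, S y,
      ENNReal.ofReal (∏ t : Fin (k + 1),
          trans p ((f s).1 t.castSucc) ((f s).1 t.succ))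
        = ENNReal.ofReal (∏ t : Fin k, trans p (s.2.1 t.castSucc) (s.2.1 t.succ))
          * ENNReal.ofReal (trans p s.1 z) := by
    rintro ⟨y, xs, h0, h1⟩
    have hprod : (∏ t : Fin (k + 1),
        trans p ((Fin.snoc xs z : Fin (k+2) → Fin d → ℕ) t.castSucc)
          ((Fin.snoc xs z : Fin (k+2) → Fin d → ℕ) t.succ))
        = (∏ t : Fin k, trans p (xs t.castSucc) (xs t.succ)) * trans p y z := by
      rw [Fin.prod_univ_castSucc]
      congr 1
      · refine Finset.prod_congr rfl fun t _ => ?_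
        rw [Fin.succ_castSucc, Fin.snoc_castSucc, Fin.snoc_castSucc]
      · rw [Fin.succ_last, Fin.snoc_last, Fin.snoc_castSucc, h1]
    simp only [hfdef]
    rw [hprod, ENNReal.ofReal_mul (Finset.prod_nonneg fun t _ => trans_nonneg hp _ _)]
  calc Qpath p x (k + 1) z
      = ∑' s : Σ y : Fin d → ℕ, S y,
          ENNReal.ofReal (∏ t : Fin (k + 1),
            trans p ((f s).1 t.castSucc) ((f s).1 t.succ)) := by
        rw [Qpath, ← (Equiv.ofBijective f hbij).tsum_eq]
        rfl
    _ = ∑' s : Σ y : Fin d → ℕ, S y,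
          ENNReal.ofReal (∏ t : Fin k, trans p (s.2.1 t.castSucc) (s.2.1 t.succ))
            * ENNReal.ofReal (trans p s.1 z) := tsum_congr hsplit
    _ = ∑' y, ∑' xs : S y,
          ENNReal.ofReal (∏ t : Fin k, trans p (xs.1 t.castSucc) (xs.1 t.succ))
            * ENNReal.ofReal (trans p y z) := ENNReal.tsum_sigma' _
    _ = ∑' y, Qpath p x k y * ENNReal.ofReal (trans p y z) := by
        refine tsum_congr fun y => ?_
        rw [Qpath, ENNReal.tsum_mul_right]

lemma Qpath_mass {p : Fin d → (Fin d → ℕ) → ℝ} (x : Fin d → ℕ)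
    (hp : ∀ i z, 0 ≤ p i z) (hm : ∀ y, massE (trans p y) = 1) :
    ∀ k, ∑' z, Qpath p x k z = 1
  | 0 => by
    rw [tsum_eq_single x (fun z hz => by rw [Qpath_zero]; simp [hz])]
    rw [Qpath_zero]; simp
  | k + 1 => by
    calc ∑' z, Qpath p x (k+1) z
        = ∑' z, ∑' y, Qpath p x k y * ENNReal.ofReal (trans p y z) := by
          exact tsum_congr fun z => by rw [Qpath_succ p hp]
      _ = ∑' y, ∑' z, Qpath p x k y * ENNReal.ofReal (trans p y z) := ENNReal.tsum_comm
      _ = ∑' y, Qpath p x k y * massE (trans p y) := by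
          refine tsum_congr fun y => ?_
          rw [ENNReal.tsum_mul_left]; rfl
      _ = ∑' y, Qpath p x k y := by
          refine tsum_congr fun y => by rw [hm y, mul_one]
      _ = 1 := Qpath_mass x hp hm k

lemma Qpath_mean {p : Fin d → (Fin d → ℕ) → ℝ} {u : Fin d → ℝ} {r : ℝ≥0∞} (x : Fin d → ℕ)
    (hp : ∀ i z, 0 ≤ p i z) (hmean : ∀ y, meanU u (trans p y) = r * wU u y) :
    ∀ k, ∑' z, Qpath p x k z * wU u z = r ^ k * wU u x
  | 0 => by
    rw [tsum_eq_single x (fun z hz => by rw [Qpath_zero]; simp [hz])]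
    rw [Qpath_zero]; simp
  | k + 1 => by
    calc ∑' z, Qpath p x (k+1) z * wU u z
        = ∑' z, ∑' y, Qpath p x k y * ENNReal.ofReal (trans p y z) * wU u z := by
          refine tsum_congr fun z => ?_
          rw [Qpath_succ p hp, ENNReal.tsum_mul_right]
      _ = ∑' y, ∑' z, Qpath p x k y * (ENNReal.ofReal (trans p y z) * wU u z) := by
          rw [ENNReal.tsum_comm]
          exact tsum_congr fun y => tsum_congr fun z => by ring
      _ = ∑' y, Qpath p x k y * (r * wU u y) := by
          refine tsum_congr fun y => ?_
          rw [ENNReal.tsum_mul_left, ← hmean y]; rfl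
      _ = r * (r ^ k * wU u x) := by
          rw [← Qpath_mean x hp hmean k, ← ENNReal.tsum_mul_left]
          exact tsum_congr fun y => by ring
      _ = r ^ (k+1) * wU u x := by ring

lemma Qpath_sq_rec {p : Fin d → (Fin d → ℕ) → ℝ} {u : Fin d → ℝ} {B r2 : ℝ≥0∞} (x : Fin d → ℕ)
    (hp : ∀ i z, 0 ≤ p i z)
    (hsq : ∀ y, sqU u (trans p y) ≤ B * wU u y + r2 * (wU u y) ^ 2) (k : ℕ) :
    ∑' z, Qpath p x (k+1) z * (wU u z) ^ 2
      ≤ B * (∑' z, Qpath p x k z * wU u z) + r2 * ∑' z, Qpath p x k z * (wU u z) ^ 2 := by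
  calc ∑' z, Qpath p x (k+1) z * (wU u z) ^ 2
      = ∑' y, ∑' z, Qpath p x k y * (ENNReal.ofReal (trans p y z) * (wU u z) ^ 2) := by
        rw [← ENNReal.tsum_comm]
        refine tsum_congr fun z => ?_
        rw [Qpath_succ p hp, ← ENNReal.tsum_mul_right]
        exact tsum_congr fun y => by ring
    _ = ∑' y, Qpath p x k y * sqU u (trans p y) := by
        refine tsum_congr fun y => ?_
        rw [ENNReal.tsum_mul_left]; rfl
    _ ≤ ∑' y, Qpath p x k y * (B * wU u y + r2 * (wU u y) ^ 2) := by
        exact ENNReal.tsum_le_tsum fun y => mul_le_mul_right (hsq y) _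
    _ = B * (∑' z, Qpath p x k z * wU u z) + r2 * ∑' z, Qpath p x k z * (wU u z) ^ 2 := by
        rw [← ENNReal.tsum_mul_left, ← ENNReal.tsum_mul_left, ← ENNReal.tsum_add]
        exact tsum_congr fun y => by ring

lemma measure_le_Qpath {p : Fin d → (Fin d → ℕ) → ℝ}
    {μ : (Fin d → ℕ) → MeasureTheory.Measure (ℕ → Fin d → ℕ)}
    (hμprob : ∀ x, MeasureTheory.IsProbabilityMeasure (μ x))
    (hμ : ∀ (x : Fin d → ℕ) (k : ℕ) (xs : ℕ → Fin d → ℕ), xs 0 = x →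
      μ x {ω | ∀ j ≤ k, ω j = xs j}
        = ENNReal.ofReal (∏ j ∈ Finset.range k, trans p (xs j) (xs (j + 1))))
    (x : Fin d → ℕ) (k : ℕ) (z : Fin d → ℕ) :
    μ x {ω | ω k = z} ≤ Qpath p x k z := by
  classical
  haveI := hμprob x
  have h0 : μ x {ω | ω 0 = x} = 1 := by
    have := hμ x 0 (fun _ => x) rfl
    simp only [Finset.range_zero, Finset.prod_empty, ENNReal.ofReal_one] at this
    rw [← this]
    congr 1
    ext ω
    simp [Nat.le_zero]
  have hmeas : MeasurableSet {ω : ℕ → Fin d → ℕ | ω 0 = x} := by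
    have : {ω : ℕ → Fin d → ℕ | ω 0 = x} = (fun ω : ℕ → Fin d → ℕ => ω 0) ⁻¹' {x} := rfl
    rw [this]
    exact measurable_pi_apply 0 (MeasurableSet.singleton x)
  have hnull : μ x {ω | ¬ ω 0 = x} = 0 := by
    have : {ω : ℕ → Fin d → ℕ | ¬ ω 0 = x} = {ω : ℕ → Fin d → ℕ | ω 0 = x}ᶜ := rfl
    rw [this, MeasureTheory.measure_compl hmeas (MeasureTheory.measure_ne_top _ _), h0,
      MeasureTheory.measure_univ, tsub_self]
  set S := {xs : Fin (k + 1) → Fin d → ℕ // xs 0 = x ∧ xs (Fin.last k) = z} with hS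
  set ext : S → ℕ → Fin d → ℕ :=
    fun xs t => if h : t < k + 1 then xs.1 ⟨t, h⟩ else z with hext
  have hincl : {ω : ℕ → Fin d → ℕ | ω k = z}
      ⊆ {ω : ℕ → Fin d → ℕ | ¬ ω 0 = x} ∪ ⋃ xs : S, {ω | ∀ j ≤ k, ω j = ext xs j} := by
    intro ω hω
    by_cases hx : ω 0 = x
    · right
      refine Set.mem_iUnion.mpr ⟨⟨fun t => ω t, hx, hω⟩, ?_⟩
      intro j hj
      simp only [hext]
      rw [dif_pos (Nat.lt_succ_of_le hj)]
    · exact Or.inl hx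
  calc μ x {ω | ω k = z}
      ≤ μ x ({ω : ℕ → Fin d → ℕ | ¬ ω 0 = x}
          ∪ ⋃ xs : S, {ω | ∀ j ≤ k, ω j = ext xs j}) := MeasureTheory.measure_mono hincl
    _ ≤ μ x {ω : ℕ → Fin d → ℕ | ¬ ω 0 = x}
          + μ x (⋃ xs : S, {ω | ∀ j ≤ k, ω j = ext xs j}) := MeasureTheory.measure_union_le _ _
    _ ≤ 0 + ∑' xs : S, μ x {ω | ∀ j ≤ k, ω j = ext xs j} := by
        rw [hnull]
        exact add_le_add le_rfl (MeasureTheory.measure_iUnion_le _)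
    _ = ∑' xs : S, μ x {ω | ∀ j ≤ k, ω j = ext xs j} := by rw [zero_add]
    _ = Qpath p x k z := by
        simp only [Qpath]
        refine tsum_congr fun xs => ?_
        have hx0 : ext xs 0 = x := by
          simp only [hext]
          rw [dif_pos (Nat.succ_pos k)]
          exact xs.2.1
        rw [hμ x k (ext xs) hx0]
        congr 1
        have : ∀ t : Fin k, trans p (ext xs t.val) (ext xs (t.val + 1))
            = trans p (xs.1 t.castSucc) (xs.1 t.succ) := by
          intro t
          simp only [hext]
          rw [dif_pos (Nat.lt_succ_of_lt t.2), dif_pos (Nat.succ_lt_succ t.2)]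
          rfl
        rw [← Fin.prod_univ_eq_prod_range (fun j => trans p (ext xs j) (ext xs (j+1))) k]
        exact Finset.prod_congr rfl fun t _ => this t

lemma massE_pmf {q : (Fin d → ℕ) → ℝ} (hq : IsPMF q) : massE q = 1 := by
  rw [massE, show (toE q) = fun z => ENNReal.ofReal (q z) from rfl,
    ← ENNReal.ofReal_tsum_of_nonneg hq.nonneg hq.hasSum.summable, hq.hasSum.tsum_eq,
    ENNReal.ofReal_one]

lemma summable_lin {q : (Fin d → ℕ) → ℝ} (hq : IsPMF q)
    (h2 : Summable fun k => q k * (∑ j, (k j : ℝ)) ^ 2) (j : Fin d) :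
    Summable fun k => q k * (k j : ℝ) := by
  refine Summable.of_nonneg_of_le (fun k => mul_nonneg (hq.nonneg k) (Nat.cast_nonneg _))
    (fun k => ?_) (hq.hasSum.summable.add h2)
  have h1 : (k j : ℝ) ≤ ∑ l, (k l : ℝ) :=
    Finset.single_le_sum (f := fun l => (k l : ℝ)) (fun l _ => Nat.cast_nonneg _) (Finset.mem_univ j)
  have h3 : (0:ℝ) ≤ ∑ l, (k l : ℝ) := Finset.sum_nonneg fun l _ => Nat.cast_nonneg _
  have : (k j : ℝ) ≤ 1 + (∑ l, (k l : ℝ)) ^ 2 := by nlinarith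
  calc q k * (k j : ℝ) ≤ q k * (1 + (∑ l, (k l : ℝ)) ^ 2) :=
        mul_le_mul_of_nonneg_left this (hq.nonneg k)
    _ = q k + q k * (∑ l, (k l : ℝ)) ^ 2 := by ring

lemma summable_uw {q : (Fin d → ℕ) → ℝ} (hq : IsPMF q)
    (h2 : Summable fun k => q k * (∑ j, (k j : ℝ)) ^ 2) (u : Fin d → ℝ) :
    Summable fun k => q k * (∑ j, (k j : ℝ) * u j) := by
  have : (fun k : Fin d → ℕ => q k * (∑ j, (k j : ℝ) * u j))
      = fun k => ∑ j, (q k * (k j : ℝ)) * u j := by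
    funext k
    rw [Finset.mul_sum]
    exact Finset.sum_congr rfl fun jj _ => by ring
  rw [this]
  exact summable_sum fun j _ => (summable_lin hq h2 j).mul_right (u j)

lemma meanU_eq {q : (Fin d → ℕ) → ℝ} (hq : IsPMF q)
    (h2 : Summable fun k => q k * (∑ j, (k j : ℝ)) ^ 2) (u : Fin d → ℝ) (hu0 : ∀ i, 0 ≤ u i) :
    meanU u q = ENNReal.ofReal (∑ j, (∑' k, q k * (k j : ℝ)) * u j) := by
  have hnn : ∀ k : Fin d → ℕ, 0 ≤ q k * (∑ j, (k j : ℝ) * u j) :=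
    fun k => mul_nonneg (hq.nonneg k)
      (Finset.sum_nonneg fun j _ => mul_nonneg (Nat.cast_nonneg _) (hu0 j))
  have step1 : meanU u q = ENNReal.ofReal (∑' k, q k * (∑ j, (k j : ℝ) * u j)) := by
    rw [ENNReal.ofReal_tsum_of_nonneg hnn (summable_uw hq h2 u), meanU]
    exact tsum_congr fun k => (ENNReal.ofReal_mul (hq.nonneg k)).symm
  rw [step1]
  congr 1
  have hsw : ∑' k, q k * (∑ j, (k j : ℝ) * u j) = ∑' k, ∑ j, (q k * (k j : ℝ)) * u j := by
    refine tsum_congr fun k => ?_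
    rw [Finset.mul_sum]
    exact Finset.sum_congr rfl fun jj _ => by ring
  rw [hsw, Summable.tsum_finsetSum (fun j _ => (summable_lin hq h2 j).mul_right (u j))]
  exact Finset.sum_congr rfl fun j _ => tsum_mul_right

lemma wU_le_sn {u : Fin d → ℝ} (hu1 : ∀ i, u i ≤ 1) (hu0 : ∀ i, 0 ≤ u i) (z : Fin d → ℕ) :
    wU u z ≤ ENNReal.ofReal (∑ l, (z l : ℝ)) := by
  refine ENNReal.ofReal_le_ofReal (Finset.sum_le_sum fun i _ => ?_)
  calc (z i : ℝ) * u i ≤ (z i : ℝ) * 1 :=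
        mul_le_mul_of_nonneg_left (hu1 i) (Nat.cast_nonneg _)
    _ = (z i : ℝ) := mul_one _

lemma sqU_le {q : (Fin d → ℕ) → ℝ} (hq : IsPMF q)
    (h2 : Summable fun k => q k * (∑ j, (k j : ℝ)) ^ 2) (u : Fin d → ℝ)
    (hu0 : ∀ i, 0 ≤ u i) (hu1 : ∀ i, u i ≤ 1) :
    sqU u q ≤ ENNReal.ofReal (∑' k, q k * (∑ j, (k j : ℝ)) ^ 2) := by
  rw [ENNReal.ofReal_tsum_of_nonneg
    (fun k => mul_nonneg (hq.nonneg k) (sq_nonneg _)) h2, sqU]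
  refine ENNReal.tsum_le_tsum fun k => ?_
  rw [ENNReal.ofReal_mul (hq.nonneg k)]
  refine mul_le_mul_right ?_ _
  calc (wU u k) ^ 2 ≤ (ENNReal.ofReal (∑ l, (k l : ℝ))) ^ 2 :=
        pow_le_pow_left' (wU_le_sn hu1 hu0 k) 2
    _ = ENNReal.ofReal ((∑ l, (k l : ℝ)) ^ 2) :=
        (ENNReal.ofReal_pow (Finset.sum_nonneg fun l _ => Nat.cast_nonneg _) 2).symm

lemma sqU_ne_top {q : (Fin d → ℕ) → ℝ} (hq : IsPMF q)
    (h2 : Summable fun k => q k * (∑ j, (k j : ℝ)) ^ 2) (u : Fin d → ℝ)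
    (hu0 : ∀ i, 0 ≤ u i) (hu1 : ∀ i, u i ≤ 1) : sqU u q ≠ ⊤ :=
  ne_top_of_le_ne_top ENNReal.ofReal_ne_top (sqU_le hq h2 u hu0 hu1)

lemma sum_natmul_ofReal (u : Fin d → ℝ) (hu0 : ∀ i, 0 ≤ u i) (c : ℝ) (hc : 0 ≤ c)
    (y : Fin d → ℕ) :
    ∑ i, (y i : ℝ≥0∞) * ENNReal.ofReal (c * u i) = ENNReal.ofReal c * wU u y := by
  have : ∀ i, (y i : ℝ≥0∞) * ENNReal.ofReal (c * u i)
      = ENNReal.ofReal ((y i : ℝ) * (c * u i)) := by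
    intro i
    rw [ENNReal.ofReal_mul (Nat.cast_nonneg _), ENNReal.ofReal_natCast]
  rw [Finset.sum_congr rfl fun i _ => this i,
    ← ENNReal.ofReal_sum_of_nonneg
      (fun i _ => mul_nonneg (Nat.cast_nonneg _) (mul_nonneg hc (hu0 i))),
    wU, ← ENNReal.ofReal_mul hc]
  congr 1
  rw [Finset.mul_sum]
  exact Finset.sum_congr rfl fun i _ => by ring

lemma moment_bound {p : Fin d → (Fin d → ℕ) → ℝ} (hp : ∀ i, IsPMF (p i))
    {μ : (Fin d → ℕ) → MeasureTheory.Measure (ℕ → Fin d → ℕ)}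
    (hμprob : ∀ x, MeasureTheory.IsProbabilityMeasure (μ x))
    (hμfdd : ∀ (x : Fin d → ℕ) (k : ℕ) (xs : ℕ → Fin d → ℕ), xs 0 = x →
      μ x {ω | ∀ j ≤ k, ω j = xs j}
        = ENNReal.ofReal (∏ j ∈ Finset.range k, trans p (xs j) (xs (j + 1))))
    (hmom2 : ∀ i, Summable fun k => p i k * (∑ j, (k j : ℝ)) ^ 2)
    {M : Matrix (Fin d) (Fin d) ℝ} (hMdef : ∀ i j, M i j = ∑' k, p i k * (k j : ℝ))
    {ρ : ℝ} (hρ0 : 0 < ρ) (hsub : ρ < 1)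
    {u : Fin d → ℝ} (hu : ∀ i, 0 < u i) (hMu : M.mulVec u = ρ • u)
    (hnorm1 : ∑ i, u i = 1) (x : Fin d → ℕ) (hx : wU u x ≤ 1) :
    ∃ CC : ℝ, 0 ≤ CC ∧ ∀ (k : ℕ) (F : Finset (Fin d → ℕ)),
      ∑ z ∈ F, (μ x {ω | ω k = z}).toReal * (∑ l, (z l : ℝ)) ^ 2 ≤ CC * ρ ^ k := by
  classical
  have hd : Nonempty (Fin d) := by
    by_contra h
    rw [not_nonempty_iff] at h
    have : (0:ℝ) = 1 := by rw [← hnorm1]; simp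
    norm_num at this
  haveI := hd
  obtain ⟨j⟩ := hd
  have hp' : ∀ i z, 0 ≤ p i z := fun i => (hp i).nonneg
  have hu0 : ∀ i, 0 ≤ u i := fun i => (hu i).le
  have hu1 : ∀ i, u i ≤ 1 := by
    intro i
    calc u i ≤ ∑ l, u l :=
          Finset.single_le_sum (f := fun l => u l) (fun l _ => hu0 l) (Finset.mem_univ i)
      _ = 1 := hnorm1
  set m : Fin d → ℝ≥0∞ := fun i => ENNReal.ofReal (ρ * u i) with hm
  set c : Fin d → ℝ≥0∞ := fun i => sqU u (p i) with hc
  have hPg : ∀ i, Pgood u (p i) (m i) (c i) := by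
    intro i
    refine ⟨(hp i).nonneg, massE_pmf (hp i), ?_, le_self_add⟩
    rw [meanU_eq (hp i) (hmom2 i) u hu0]
    congr 1
    have : ∀ jj, (∑' k, p i k * (k jj : ℝ)) = M i jj := fun jj => (hMdef i jj).symm
    rw [Finset.sum_congr rfl fun jj _ => by rw [this jj]]
    have := congrFun hMu i
    rw [Matrix.mulVec, dotProduct] at this
    rw [this]
    simp
  -- transition moment estimates
  have htmass : ∀ y, massE (trans p y) = 1 := fun y => (Pgood_trans hu0 hPg y).mass1
  have htmean : ∀ y, meanU u (trans p y) = ENNReal.ofReal ρ * wU u y := by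
    intro y
    rw [(Pgood_trans hu0 hPg y).mean]
    exact sum_natmul_ofReal u hu0 ρ hρ0.le y
  set B : ℝ := Finset.univ.sup' (Finset.univ_nonempty) (fun i => (c i).toReal / u i) with hB
  have hB0 : 0 ≤ B :=
    le_trans (div_nonneg ENNReal.toReal_nonneg (hu0 j)) (Finset.le_sup' (f := fun i => (c i).toReal / u i) (Finset.mem_univ j))
  have hcB : ∀ i, c i ≤ ENNReal.ofReal (B * u i) := by
    intro i
    have hne : c i ≠ ⊤ := sqU_ne_top (hp i) (hmom2 i) u hu0 hu1
    rw [← ENNReal.ofReal_toReal hne]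
    refine ENNReal.ofReal_le_ofReal ?_
    rw [← div_mul_cancel₀ ((c i).toReal) (ne_of_gt (hu i))]
    exact mul_le_mul_of_nonneg_right (Finset.le_sup' (f := fun i => (c i).toReal / u i) (Finset.mem_univ i)) (hu0 i)
  have htsq : ∀ y, sqU u (trans p y)
      ≤ ENNReal.ofReal B * wU u y + (ENNReal.ofReal ρ) ^ 2 * (wU u y) ^ 2 := by
    intro y
    refine le_trans (Pgood_trans hu0 hPg y).sq ?_
    have h1 : ∑ i, (y i : ℝ≥0∞) * c i ≤ ENNReal.ofReal B * wU u y := by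
      calc ∑ i, (y i : ℝ≥0∞) * c i ≤ ∑ i, (y i : ℝ≥0∞) * ENNReal.ofReal (B * u i) :=
            Finset.sum_le_sum fun i _ => mul_le_mul_right (hcB i) _
        _ = ENNReal.ofReal B * wU u y := sum_natmul_ofReal u hu0 B hB0 y
    have h2 : (∑ i, (y i : ℝ≥0∞) * m i) ^ 2 = (ENNReal.ofReal ρ) ^ 2 * (wU u y) ^ 2 := by
      rw [sum_natmul_ofReal u hu0 ρ hρ0.le y, mul_pow]
    exact add_le_add h1 h2.le
  set A0 : ℝ := max 1 (B / (ρ * (1 - ρ))) with hA0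
  have hA01 : (1:ℝ) ≤ A0 := le_max_left _ _
  have hA00 : 0 ≤ A0 := le_trans zero_le_one hA01
  have hABineq : B ≤ A0 * (ρ * (1 - ρ)) := by
    have hq : 0 < ρ * (1 - ρ) := mul_pos hρ0 (by linarith)
    have := le_max_right 1 (B / (ρ * (1 - ρ)))
    calc B = B / (ρ * (1 - ρ)) * (ρ * (1 - ρ)) := (div_mul_cancel₀ _ (ne_of_gt hq)).symm
      _ ≤ A0 * (ρ * (1 - ρ)) := mul_le_mul_of_nonneg_right this hq.le
  have hW : ∀ k, ∑' z, Qpath p x k z * (wU u z) ^ 2 ≤ ENNReal.ofReal (A0 * ρ ^ k) := by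
    intro k
    induction k with
    | zero =>
      rw [tsum_eq_single x (fun z hz => by rw [Qpath_zero]; simp [hz])]
      rw [Qpath_zero]
      simp only [if_true, eq_self_iff_true, one_mul, pow_zero, mul_one]
      calc (wU u x) ^ 2 ≤ 1 ^ 2 := pow_le_pow_left' hx 2
        _ = 1 := one_pow 2
        _ ≤ ENNReal.ofReal A0 := by
            rw [← ENNReal.ofReal_one]
            exact ENNReal.ofReal_le_ofReal hA01
    | succ k ih =>
      refine le_trans (Qpath_sq_rec x hp' htsq k) ?_
      have hMk : ∑' z, Qpath p x k z * wU u z ≤ ENNReal.ofReal (ρ ^ k) := by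
        rw [Qpath_mean x hp' htmean k]
        calc (ENNReal.ofReal ρ) ^ k * wU u x ≤ (ENNReal.ofReal ρ) ^ k * 1 :=
              mul_le_mul_right hx _
          _ = (ENNReal.ofReal ρ) ^ k := mul_one _
          _ = ENNReal.ofReal (ρ ^ k) := (ENNReal.ofReal_pow hρ0.le k).symm
      calc ENNReal.ofReal B * (∑' z, Qpath p x k z * wU u z)
            + (ENNReal.ofReal ρ) ^ 2 * ∑' z, Qpath p x k z * (wU u z) ^ 2
          ≤ ENNReal.ofReal B * ENNReal.ofReal (ρ ^ k)
            + (ENNReal.ofReal ρ) ^ 2 * ENNReal.ofReal (A0 * ρ ^ k) := by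
            exact add_le_add (mul_le_mul_right hMk _) (mul_le_mul_right ih _)
        _ = ENNReal.ofReal (B * ρ ^ k + ρ ^ 2 * (A0 * ρ ^ k)) := by
            rw [ENNReal.ofReal_add (by positivity) (by positivity),
              ← ENNReal.ofReal_mul hB0, ← ENNReal.ofReal_pow hρ0.le,
              ← ENNReal.ofReal_mul (by positivity)]
        _ ≤ ENNReal.ofReal (A0 * ρ ^ (k + 1)) := by
            refine ENNReal.ofReal_le_ofReal ?_
            have hpk : (0:ℝ) ≤ ρ ^ k := pow_nonneg hρ0.le k
            have expand : A0 * ρ ^ (k+1) = A0 * ρ * ρ ^ k := by ring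
            nlinarith [mul_le_mul_of_nonneg_right hABineq hpk]
  -- minimum of u
  set umin : ℝ := Finset.univ.inf' (Finset.univ_nonempty) u with humin
  have humin0 : 0 < umin := by
    obtain ⟨i0, _, hi0⟩ := Finset.exists_mem_eq_inf' (Finset.univ_nonempty) u
    rw [humin, hi0]
    exact hu i0
  have hsn : ∀ z : Fin d → ℕ, ENNReal.ofReal (∑ l, (z l : ℝ))
      ≤ ENNReal.ofReal umin⁻¹ * wU u z := by
    intro z
    rw [wU, ← ENNReal.ofReal_mul (by positivity)]
    refine ENNReal.ofReal_le_ofReal ?_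
    rw [Finset.mul_sum]
    refine Finset.sum_le_sum fun l _ => ?_
    have : umin ≤ u l := Finset.inf'_le _ (Finset.mem_univ l)
    rw [show umin⁻¹ * ((z l : ℝ) * u l) = (z l : ℝ) * (u l / umin) by field_simp]
    calc (z l : ℝ) = (z l : ℝ) * 1 := (mul_one _).symm
      _ ≤ (z l : ℝ) * (u l / umin) := by
          refine mul_le_mul_of_nonneg_left ?_ (Nat.cast_nonneg _)
          rw [le_div_iff₀ humin0]
          linarith
  refine ⟨umin⁻¹ ^ 2 * A0, by positivity, fun k F => ?_⟩
  -- ENNReal estimate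
  have hENN : ∑ z ∈ F, μ x {ω | ω k = z} * ENNReal.ofReal ((∑ l, (z l : ℝ)) ^ 2)
      ≤ ENNReal.ofReal (umin⁻¹ ^ 2 * A0 * ρ ^ k) := by
    calc ∑ z ∈ F, μ x {ω | ω k = z} * ENNReal.ofReal ((∑ l, (z l : ℝ)) ^ 2)
        ≤ ∑ z ∈ F, Qpath p x k z * ((ENNReal.ofReal umin⁻¹) ^ 2 * (wU u z) ^ 2) := by
          refine Finset.sum_le_sum fun z _ => ?_
          refine mul_le_mul (measure_le_Qpath hμprob hμfdd x k z) ?_ zero_le zero_le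
          rw [ENNReal.ofReal_pow (Finset.sum_nonneg fun l _ => Nat.cast_nonneg _), ← mul_pow]
          exact pow_le_pow_left' (hsn z) 2
      _ ≤ (ENNReal.ofReal umin⁻¹) ^ 2 * ∑' z, Qpath p x k z * (wU u z) ^ 2 := by
          have hcomm : ∀ z, Qpath p x k z * ((ENNReal.ofReal umin⁻¹) ^ 2 * (wU u z) ^ 2)
              = (ENNReal.ofReal umin⁻¹) ^ 2 * (Qpath p x k z * (wU u z) ^ 2) := fun z => by ring
          rw [Finset.sum_congr rfl fun z _ => hcomm z, ← Finset.mul_sum]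
          exact mul_le_mul_right (ENNReal.sum_le_tsum F) _
      _ ≤ (ENNReal.ofReal umin⁻¹) ^ 2 * ENNReal.ofReal (A0 * ρ ^ k) :=
          mul_le_mul_right (hW k) _
      _ = ENNReal.ofReal (umin⁻¹ ^ 2 * A0 * ρ ^ k) := by
          rw [← ENNReal.ofReal_pow (by positivity), ← ENNReal.ofReal_mul (by positivity)]
          congr 1
          ring
  -- convert to real
  have hfin : ∀ z ∈ F, μ x {ω | ω k = z} * ENNReal.ofReal ((∑ l, (z l : ℝ)) ^ 2) ≠ ⊤ :=
    fun z _ => ENNReal.mul_ne_top (MeasureTheory.measure_ne_top _ _) ENNReal.ofReal_ne_top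
  have := ENNReal.toReal_mono ENNReal.ofReal_ne_top hENN
  rw [ENNReal.toReal_sum hfin, ENNReal.toReal_ofReal (by positivity)] at this
  refine le_trans (le_of_eq ?_) this
  refine Finset.sum_congr rfl fun z _ => ?_
  rw [ENNReal.toReal_mul, ENNReal.toReal_ofReal (sq_nonneg _)]

open Filter Topology

lemma single_sum_u (u : Fin d → ℝ) (j : Fin d) :
    ∑ l, ((Pi.single j 1 : Fin d → ℕ) l : ℝ) * u l = u j := by
  rw [Finset.sum_eq_single j]
  · simp
  · intro l _ hl
    rw [Pi.single_eq_of_ne hl]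
    simp
  · intro h
    exact absurd (Finset.mem_univ j) h

theorem deriv_iterate_limit' {d : ℕ} (p : Fin d → (Fin d → ℕ) → ℝ)
    (hp : ∀ i, IsPMF (p i))
    (μ : (Fin d → ℕ) → MeasureTheory.Measure (ℕ → Fin d → ℕ))
    (hμprob : ∀ x, MeasureTheory.IsProbabilityMeasure (μ x))
    (hμfdd : ∀ (x : Fin d → ℕ) (k : ℕ) (xs : ℕ → Fin d → ℕ), xs 0 = x →
      μ x {ω | ∀ j ≤ k, ω j = xs j}
        = ENNReal.ofReal (∏ j ∈ Finset.range k, trans p (xs j) (xs (j + 1))))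
    (hmom2 : ∀ i, Summable fun k => p i k * (∑ j, (k j : ℝ)) ^ 2)
    (M : Matrix (Fin d) (Fin d) ℝ) (hMdef : ∀ i j, M i j = ∑' k, p i k * (k j : ℝ))
    (ρ : ℝ) (hρ0 : 0 < ρ) (hsub : ρ < 1)
    (u : Fin d → ℝ) (hu : ∀ i, 0 < u i)
    (hMu : M.mulVec u = ρ • u)
    (hnorm1 : ∑ i, u i = 1)
    (γ : ℝ) (hγ : 0 < γ)
    (hgam : ∀ x : Fin d → ℕ, x ≠ 0 →
      Tendsto (fun k => (ρ ^ k)⁻¹ * (μ x {ω | ω k ≠ 0}).toReal) atTop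
        (nhds (γ * ∑ i, (x i : ℝ) * u i)))
    (ν : (Fin d → ℕ) → ℝ) (hν0 : ν 0 = 0)
    (hyag : ∀ x0 : Fin d → ℕ, x0 ≠ 0 → ∀ z : Fin d → ℕ, z ≠ 0 →
      Tendsto (fun k =>
          (μ x0 {ω | ω k = z}).toReal / (μ x0 {ω | ω k ≠ 0}).toReal) atTop
        (nhds (ν z))) :
    ∀ r : Fin d → ℝ, (∀ i, 0 ≤ r i) → (∀ i, r i ≤ 1) → ∀ i j : Fin d,
      Tendsto (fun k => (ρ ^ k)⁻¹ *
          ∑' z : Fin d → ℕ, (μ (Pi.single j 1) {ω | ω k = z}).toReal * (z i : ℝ) *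
            npow r (z - Pi.single i 1)) atTop
        (nhds (γ * u j *
          ∑' z : Fin d → ℕ, ν z * (z i : ℝ) * npow r (z - Pi.single i 1))) := by
  intro r hr0 hr1 i j
  have hu0 : ∀ l, 0 ≤ u l := fun l => (hu l).le
  have hu1 : ∀ l, u l ≤ 1 := by
    intro l
    calc u l ≤ ∑ i, u i :=
          Finset.single_le_sum (f := fun i => u i) (fun i _ => hu0 i) (Finset.mem_univ l)
      _ = 1 := hnorm1
  set x : Fin d → ℕ := Pi.single j 1 with hxdef
  have hx0 : x ≠ 0 := by
    intro h
    have := congrFun h j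
    rw [hxdef] at this
    simp at this
  have hxwU : wU u x ≤ 1 := by
    rw [wU, single_sum_u u j]
    exact ENNReal.ofReal_le_one.mpr (hu1 j)
  obtain ⟨CC, hCC0, hCCb⟩ :=
    moment_bound hp hμprob hμfdd hmom2 hMdef hρ0 hsub hu hMu hnorm1 x hxwU
  -- abbreviations
  set a : ℕ → (Fin d → ℕ) → ℝ := fun k z => (μ x {ω | ω k = z}).toReal with ha
  set b : ℕ → (Fin d → ℕ) → ℝ := fun k z => (ρ ^ k)⁻¹ * a k z with hb
  set w : (Fin d → ℕ) → ℝ := fun z => (z i : ℝ) * npow r (z - Pi.single i 1) with hw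
  set nn : (Fin d → ℕ) → ℝ := fun z => γ * u j * ν z with hnn
  set SS : (Fin d → ℕ) → ℝ := fun z => (∑ l, (z l : ℝ)) ^ 2 with hSS
  have hρk : ∀ k : ℕ, (0:ℝ) < ρ ^ k := fun k => pow_pos hρ0 k
  have ha0 : ∀ k z, 0 ≤ a k z := fun k z => ENNReal.toReal_nonneg
  have hb0 : ∀ k z, 0 ≤ b k z := fun k z => mul_nonneg (by positivity) (ha0 k z)
  have hw0 : ∀ z, 0 ≤ w z := by
    intro z
    refine mul_nonneg (Nat.cast_nonneg _) (Finset.prod_nonneg fun l _ => pow_nonneg (hr0 l) _)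
  have hwzi : ∀ z, w z ≤ (z i : ℝ) := by
    intro z
    have : npow r (z - Pi.single i 1) ≤ 1 :=
      Finset.prod_le_one (fun l _ => pow_nonneg (hr0 l) _)
        (fun l _ => pow_le_one₀ (hr0 l) (hr1 l))
    calc w z ≤ (z i : ℝ) * 1 := mul_le_mul_of_nonneg_left this (Nat.cast_nonneg _)
      _ = (z i : ℝ) := mul_one _
  have hzis : ∀ z : Fin d → ℕ, (z i : ℝ) ≤ ∑ l, (z l : ℝ) :=
    fun z => Finset.single_le_sum (f := fun l => (z l : ℝ))
      (fun l _ => Nat.cast_nonneg _) (Finset.mem_univ i)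
  have hss0 : ∀ z, 0 ≤ SS z := fun z => sq_nonneg _
  have hwSS : ∀ z, w z ≤ SS z := by
    intro z
    have hcast : ∑ l, (z l : ℝ) = ((∑ l, z l : ℕ) : ℝ) := by push_cast; ring
    have hNle : ((∑ l, z l : ℕ) : ℝ) ≤ (((∑ l, z l) ^ 2 : ℕ) : ℝ) := by
      exact_mod_cast Nat.le_self_pow two_ne_zero _
    calc w z ≤ (z i : ℝ) := hwzi z
      _ ≤ ∑ l, (z l : ℝ) := hzis z
      _ ≤ SS z := by rw [hSS, hcast]; push_cast at hNle ⊢; nlinarith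
  -- finite sum bounds
  have hK : ∀ (k : ℕ) (F : Finset (Fin d → ℕ)), ∑ z ∈ F, b k z * SS z ≤ CC := by
    intro k F
    have h1 : ∑ z ∈ F, b k z * SS z = (ρ ^ k)⁻¹ * ∑ z ∈ F, a k z * SS z := by
      rw [Finset.mul_sum]
      exact Finset.sum_congr rfl fun z _ => by rw [hb]; ring
    rw [h1]
    rw [inv_mul_le_iff₀ (hρk k)]
    calc ∑ z ∈ F, a k z * SS z ≤ CC * ρ ^ k := hCCb k F
      _ = ρ ^ k * CC := by ring
  -- pointwise convergence
  have hPle : ∀ k z, z ≠ 0 → a k z ≤ (μ x {ω | ω k ≠ 0}).toReal := by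
    intro k z hz
    refine ENNReal.toReal_mono (MeasureTheory.measure_ne_top _ _)
      (MeasureTheory.measure_mono ?_)
    intro ω hω
    simp only [Set.mem_setOf_eq] at hω ⊢
    rw [hω]
    exact hz
  have hpoint : ∀ z, z ≠ 0 → Tendsto (fun k => b k z) atTop (𝓝 (nn z)) := by
    intro z hz
    have h1 := hgam x hx0
    rw [single_sum_u u j] at h1
    have h2 := hyag x hx0 z hz
    have h3 := h1.mul h2
    refine h3.congr fun k => ?_
    by_cases hP : (μ x {ω | ω k ≠ 0}).toReal = 0
    · have haz : a k z = 0 := le_antisymm (hP ▸ hPle k z hz) (ha0 k z)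
      have hbz : b k z = 0 := by
        rw [hb]
        simp only
        rw [haz, mul_zero]
      rw [hP, div_zero, mul_zero, hbz]
    · rw [hb]
      field_simp
      ring
  have hnu0 : ∀ z, 0 ≤ ν z := by
    intro z
    by_cases hz : z = 0
    · rw [hz, hν0]
    · exact ge_of_tendsto (hyag x hx0 z hz)
        (Eventually.of_forall fun k => div_nonneg ENNReal.toReal_nonneg ENNReal.toReal_nonneg)
  have hn0 : ∀ z, 0 ≤ nn z := fun z =>
    mul_nonneg (mul_nonneg hγ.le (hu0 j)) (hnu0 z)
  have hptw : ∀ z, Tendsto (fun k => b k z * w z) atTop (𝓝 (nn z * w z)) := by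
    intro z
    by_cases hz : z = 0
    · have hwz : w z = 0 := by
        rw [hw, hz]
        simp
      simp only [hwz, mul_zero]
      exact tendsto_const_nhds
    · exact (hpoint z hz).mul_const (w z)
  have hptwSS : ∀ z, Tendsto (fun k => b k z * SS z) atTop (𝓝 (nn z * SS z)) := by
    intro z
    by_cases hz : z = 0
    · have hssz : SS z = 0 := by rw [hSS, hz]; simp
      simp only [hssz, mul_zero]
      exact tendsto_const_nhds
    · exact (hpoint z hz).mul_const (SS z)
  have hKn : ∀ F : Finset (Fin d → ℕ), ∑ z ∈ F, nn z * SS z ≤ CC := by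
    intro F
    refine le_of_tendsto' (tendsto_finset_sum F fun z _ => hptwSS z) fun k => hK k F
  -- summability
  have hsum_bSS : ∀ k, Summable fun z => b k z * SS z := fun k =>
    summable_of_sum_le (fun z => mul_nonneg (hb0 k z) (hss0 z)) (hK k)
  have hsum_nSS : Summable fun z => nn z * SS z :=
    summable_of_sum_le (fun z => mul_nonneg (hn0 z) (hss0 z)) hKn
  have hsum_bw : ∀ k, Summable fun z => b k z * w z := by
    intro k
    refine Summable.of_nonneg_of_le (fun z => mul_nonneg (hb0 k z) (hw0 z))
      (fun z => mul_le_mul_of_nonneg_left (hwSS z) (hb0 k z)) (hsum_bSS k)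
  have hsum_nw : Summable fun z => nn z * w z :=
    Summable.of_nonneg_of_le (fun z => mul_nonneg (hn0 z) (hw0 z))
      (fun z => mul_le_mul_of_nonneg_left (hwSS z) (hn0 z)) hsum_nSS
  have htsum_bSS : ∀ k, ∑' z, b k z * SS z ≤ CC := fun k =>
    Summable.tsum_le_of_sum_le (hsum_bSS k) (hK k)
  have htsum_nSS : ∑' z, nn z * SS z ≤ CC := Summable.tsum_le_of_sum_le hsum_nSS hKn
  -- reduce the statement
  have hgoal : Tendsto (fun k => ∑' z, b k z * w z) atTop (𝓝 (∑' z, nn z * w z)) := by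
    rw [Metric.tendsto_atTop]
    intro ε hε
    obtain ⟨A, hA⟩ := exists_nat_gt (4 * CC / ε)
    have hA1 : (0:ℝ) < (A:ℝ) + 1 := by positivity
    have htailbound : CC / ((A:ℝ) + 1) < ε / 4 + ε / 8 := by
      have h4 : 4 * CC / ε < (A:ℝ) + 1 := lt_trans hA (by linarith)
      rw [div_lt_iff₀ hA1]
      rw [div_lt_iff₀ hε] at h4
      nlinarith
    set F : Finset (Fin d → ℕ) := Fintype.piFinset (fun _ : Fin d => Finset.range (A+1))
      with hF
    have hFc : ∀ z : Fin d → ℕ, z ∉ F → ((A:ℝ) + 1) ≤ ∑ l, (z l : ℝ) := by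
      intro z hzF
      rw [hF, Fintype.mem_piFinset] at hzF
      push_neg at hzF
      obtain ⟨l, hl⟩ := hzF
      rw [Finset.mem_range, not_lt] at hl
      calc ((A:ℝ) + 1) ≤ (z l : ℝ) := by exact_mod_cast hl
        _ ≤ ∑ l, (z l : ℝ) := Finset.single_le_sum (f := fun l => (z l : ℝ))
            (fun l _ => Nat.cast_nonneg _) (Finset.mem_univ l)
    have hwtail : ∀ z : Fin d → ℕ, z ∉ F → w z ≤ ((A:ℝ) + 1)⁻¹ * SS z := by
      intro z hzF
      have hs := hFc z hzF
      have hs0 : (0:ℝ) ≤ ∑ l, (z l : ℝ) := Finset.sum_nonneg fun l _ => Nat.cast_nonneg _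
      calc w z ≤ ∑ l, (z l : ℝ) := le_trans (hwzi z) (hzis z)
        _ ≤ ((A:ℝ) + 1)⁻¹ * SS z := by
            rw [hSS, inv_mul_eq_div, le_div_iff₀ hA1]
            show (∑ l, (z l : ℝ)) * ((A:ℝ) + 1) ≤ (∑ l, (z l : ℝ)) ^ 2
            nlinarith
      -- tails
    have htail : ∀ g : (Fin d → ℕ) → ℝ, (∀ z, 0 ≤ g z) →
        (Summable fun z => g z * w z) → (Summable fun z => g z * SS z) →
        (∑' z, g z * SS z ≤ CC) →
        ∑' z : {z : Fin d → ℕ // z ∉ F}, g z.1 * w z.1 ≤ CC / ((A:ℝ) + 1) := by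
      intro g hg hgw hgSS hgle
      have step1 : ∑' z : {z : Fin d → ℕ // z ∉ F}, g z.1 * w z.1
          ≤ ∑' z : {z : Fin d → ℕ // z ∉ F}, ((A:ℝ) + 1)⁻¹ * (g z.1 * SS z.1) := by
        refine Summable.tsum_le_tsum (fun z => ?_) (hgw.subtype _) ((hgSS.mul_left _).subtype _)
        calc g z.1 * w z.1 ≤ g z.1 * (((A:ℝ) + 1)⁻¹ * SS z.1) :=
              mul_le_mul_of_nonneg_left (hwtail z.1 z.2) (hg z.1)
          _ = ((A:ℝ) + 1)⁻¹ * (g z.1 * SS z.1) := by ring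
      rw [tsum_mul_left] at step1
      have step2 : ∑' z : {z : Fin d → ℕ // z ∉ F}, g z.1 * SS z.1 ≤ ∑' z, g z * SS z := by
        refine Summable.tsum_le_tsum_of_inj (fun z => z.1) Subtype.val_injective
          (fun z _ => mul_nonneg (hg z) (hss0 z)) (fun z => le_rfl)
          (hgSS.subtype _) hgSS
      calc ∑' z : {z : Fin d → ℕ // z ∉ F}, g z.1 * w z.1
          ≤ ((A:ℝ) + 1)⁻¹ * ∑' z : {z : Fin d → ℕ // z ∉ F}, g z.1 * SS z.1 := step1
        _ ≤ ((A:ℝ) + 1)⁻¹ * CC := by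
            refine mul_le_mul_of_nonneg_left (le_trans step2 hgle) (by positivity)
        _ = CC / ((A:ℝ) + 1) := by rw [div_eq_inv_mul]
    have hsplit : ∀ g : (Fin d → ℕ) → ℝ, (Summable fun z => g z * w z) →
        ∑' z, g z * w z = (∑ z ∈ F, g z * w z)
          + ∑' z : {z : Fin d → ℕ // z ∉ F}, g z.1 * w z.1 := by
      intro g hgw
      exact (Summable.sum_add_tsum_compl hgw).symm
    -- finite part converges
    have hfin : Tendsto (fun k => ∑ z ∈ F, b k z * w z) atTop (𝓝 (∑ z ∈ F, nn z * w z)) :=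
      tendsto_finset_sum F fun z _ => hptw z
    rw [Metric.tendsto_atTop] at hfin
    obtain ⟨N, hN⟩ := hfin (ε / 4) (by linarith)
    refine ⟨N, fun k hk => ?_⟩
    have hNk := hN k hk
    rw [Real.dist_eq] at hNk ⊢
    rw [hsplit (b k) (hsum_bw k), hsplit nn hsum_nw]
    have htb : 0 ≤ ∑' z : {z : Fin d → ℕ // z ∉ F}, b k z.1 * w z.1 :=
      tsum_nonneg fun z => mul_nonneg (hb0 k z.1) (hw0 z.1)
    have htn : 0 ≤ ∑' z : {z : Fin d → ℕ // z ∉ F}, nn z.1 * w z.1 :=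
      tsum_nonneg fun z => mul_nonneg (hn0 z.1) (hw0 z.1)
    have htb2 := htail (b k) (hb0 k) (hsum_bw k) (hsum_bSS k) (htsum_bSS k)
    have htn2 := htail nn hn0 hsum_nw hsum_nSS htsum_nSS
    have habs : |∑ z ∈ F, b k z * w z - ∑ z ∈ F, nn z * w z| < ε / 4 := hNk
    rw [abs_lt] at habs ⊢
    constructor <;> nlinarith [htailbound]
  -- translate goal
  have hgoalL : (fun k => (ρ ^ k)⁻¹ *
      ∑' z : Fin d → ℕ, (μ (Pi.single j 1) {ω | ω k = z}).toReal * (z i : ℝ) *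
        npow r (z - Pi.single i 1)) = fun k => ∑' z, b k z * w z := by
    funext k
    rw [← tsum_mul_left]
    refine tsum_congr fun z => ?_
    rw [hb, hw, ha, hxdef]
    ring
  have hgoalR : γ * u j * (∑' z : Fin d → ℕ, ν z * (z i : ℝ) * npow r (z - Pi.single i 1))
      = ∑' z, nn z * w z := by
    rw [← tsum_mul_left]
    refine tsum_congr fun z => ?_
    rw [hnn, hw]
    ring
  rw [hgoalL, hgoalR]
  exact hgoal


/-- for a subcritical positive regular nonsingular GW process with finite
second moments, `lim_k ρ^{-k} ∂f_{k,j}(r)/∂r_i = γ u_j ∂g(r)/∂r_i`, where the partial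
derivatives are expressed as the corresponding power series
`∂f_{k,j}(r)/∂r_i = Σ_z P_k(e_j, z) z_i r^{z − e_i}` and
`∂g(r)/∂r_i = Σ_z ν(z) z_i r^{z − e_i}`. -/
theorem deriv_iterate_limit {d : ℕ} (p : Fin d → (Fin d → ℕ) → ℝ)
    (hp : ∀ i, IsPMF (p i))
    (μ : (Fin d → ℕ) → Measure (ℕ → Fin d → ℕ)) (hμ : IsGW p μ)
    (hmom2 : ∀ i, Summable fun k => p i k * (∑ j, (k j : ℝ)) ^ 2)
    (M : Matrix (Fin d) (Fin d) ℝ) (hMdef : ∀ i j, M i j = ∑' k, p i k * (k j : ℝ))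
    (posreg : ∃ n, ∀ i j, 0 < (M ^ n) i j)
    (hns : ∃ i k, 0 < p i k ∧ (∑ j, k j) ≠ 1)
    (ρ : ℝ) (hρ0 : 0 < ρ) (hsub : ρ < 1)
    (u v : Fin d → ℝ) (hu : ∀ i, 0 < u i) (hv : ∀ i, 0 < v i)
    (hMu : M.mulVec u = ρ • u) (hvM : M.vecMul v = ρ • v)
    (hnorm1 : ∑ i, u i = 1) (hnorm2 : ∑ i, u i * v i = 1)
    (γ : ℝ) (hγ : 0 < γ)
    (hgam : ∀ x : Fin d → ℕ, x ≠ 0 →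
      Tendsto (fun k => (ρ ^ k)⁻¹ * (μ x {ω | ω k ≠ 0}).toReal) atTop
        (nhds (γ * ∑ i, (x i : ℝ) * u i)))
    (ν : (Fin d → ℕ) → ℝ) (hν0 : ν 0 = 0)
    (hyag : ∀ x0 : Fin d → ℕ, x0 ≠ 0 → ∀ z : Fin d → ℕ, z ≠ 0 →
      Tendsto (fun k =>
          (μ x0 {ω | ω k = z}).toReal / (μ x0 {ω | ω k ≠ 0}).toReal) atTop
        (nhds (ν z))) :
    ∀ r : Fin d → ℝ, (∀ i, 0 ≤ r i) → (∀ i, r i ≤ 1) → ∀ i j : Fin d,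
      Tendsto (fun k => (ρ ^ k)⁻¹ *
          ∑' z : Fin d → ℕ, (μ (Pi.single j 1) {ω | ω k = z}).toReal * (z i : ℝ) *
            npow r (z - Pi.single i 1)) atTop
        (nhds (γ * u j *
          ∑' z : Fin d → ℕ, ν z * (z i : ℝ) * npow r (z - Pi.single i 1))) := by
  exact deriv_iterate_limit' p hp μ hμ.1 hμ.2 hmom2 M hMdef ρ hρ0 hsub u hu hMu hnorm1
    γ hγ hgam ν hν0 hyag

end GW
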